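/- If every arriving customer is admitted by the two-server system, then every arriving customer is also admitted by the pooled server; that is, if for all k ≥ 1 we have R(k) − c(k)·min(g1(k), g2(k)) > 0, then for all k ≥ 1 we have R(k) − c(k)·G(k) > 0. -/

import Mathlib

/-- If every arriving customer is admitted by the two-server system
(`R k − c k · min (g1 k) (g2 k) > 0` for all `k ≥ 1`), then every arriving
customer is also admitted by the pooled server (`R k − c k · G k > 0`). -/
theorem admitted_by_split_admitted_by_pool
    (μ1 μ2 : ℝ) (hμ1 : 0 < μ1) (hμ2 : 0 < μ2)
    (Δ : ℕ → ℝ) (hΔ : ∀ k, 0 ≤ Δ k)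
    (R c : ℕ → ℝ) (hc : ∀ k, 0 ≤ c k)
    (f1 f2 F g1 g2 G : ℕ → ℝ)
    (hf10 : f1 0 = 1 / μ1) (hf20 : f2 0 = 1 / μ2) (hF0 : F 0 = 1 / (μ1 + μ2))
    (hg1 : ∀ k, g1 (k + 1) = max (f1 k - Δ k) (1 / μ1))
    (hg2 : ∀ k, g2 (k + 1) = max (f2 k - Δ k) (1 / μ2))
    (hG : ∀ k, G (k + 1) = max (F k - Δ k) (1 / (μ1 + μ2)))
    (hf1 : ∀ k, f1 (k + 1) =
      if g1 (k + 1) ≤ g2 (k + 1) then g1 (k + 1) + 1 / μ1 else g1 (k + 1))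
    (hf2 : ∀ k, f2 (k + 1) =
      if g1 (k + 1) ≤ g2 (k + 1) then g2 (k + 1) else g2 (k + 1) + 1 / μ2)
    (hF : ∀ k, F (k + 1) = G (k + 1) + 1 / (μ1 + μ2))
    (hadm : ∀ k, 1 ≤ k → 0 < R k - c k * min (g1 k) (g2 k)) :
    ∀ k, 1 ≤ k → 0 < R k - c k * G k := by
  have hs : 0 < μ1 + μ2 := by linarith
  have ha1 : 1 / (μ1 + μ2) ≤ 1 / μ1 := by
    apply one_div_le_one_div_of_le hμ1; linarith
  have ha2 : 1 / (μ1 + μ2) ≤ 1 / μ2 := by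
    apply one_div_le_one_div_of_le hμ2; linarith
  have hδ : 0 < 1 / (μ1 + μ2) := by positivity
  have hsδ : (μ1 + μ2) * (1 / (μ1 + μ2)) = 1 := by field_simp
  have h1a : μ1 * (1 / μ1) = 1 := by field_simp
  have h2a : μ2 * (1 / μ2) = 1 := by field_simp
  -- key invariant
  have key : ∀ k, F k ≤ f1 k ∧ F k ≤ f2 k ∧
      (μ1 + μ2) * F k + 1 ≤ μ1 * f1 k + μ2 * f2 k := by
    intro k
    induction k with
    | zero =>
      rw [hf10, hf20, hF0]
      refine ⟨ha1, ha2, ?_⟩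
      rw [h1a, h2a, hsδ]
    | succ k ih =>
      obtain ⟨hA, hB, hD⟩ := ih
      have hCmax : F k + 1 / (μ1 + μ2) ≤ max (f1 k) (f2 k) := by
        rcases le_total (f1 k) (f2 k) with h | h
        · rw [max_eq_right h]; nlinarith
        · rw [max_eq_left h]; nlinarith
      -- bounds for g
      have hgb1 : 1 / μ1 ≤ g1 (k + 1) := by rw [hg1]; exact le_max_right _ _
      have hgb2 : 1 / μ2 ≤ g2 (k + 1) := by rw [hg2]; exact le_max_right _ _
      have hgf1 : f1 k - Δ k ≤ g1 (k + 1) := by rw [hg1]; exact le_max_left _ _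
      have hgf2 : f2 k - Δ k ≤ g2 (k + 1) := by rw [hg2]; exact le_max_left _ _
      have hGle1 : G (k + 1) ≤ g1 (k + 1) := by
        rw [hG, hg1]; exact max_le_max (by linarith) ha1
      have hGle2 : G (k + 1) ≤ g2 (k + 1) := by
        rw [hG, hg2]; exact max_le_max (by linarith) ha2
      have htwo : 1 / (μ1 + μ2) + 1 / (μ1 + μ2) ≤ max (1 / μ1) (1 / μ2) := by
        rcases le_total μ1 μ2 with h | h
        · have : 1 / (μ1 + μ2) + 1 / (μ1 + μ2) ≤ 1 / μ1 := by
            rw [← add_div, div_le_div_iff₀ hs hμ1]; nlinarith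
          exact this.trans (le_max_left _ _)
        · have : 1 / (μ1 + μ2) + 1 / (μ1 + μ2) ≤ 1 / μ2 := by
            rw [← add_div, div_le_div_iff₀ hs hμ2]; nlinarith
          exact this.trans (le_max_right _ _)
      have hGmax : G (k + 1) + 1 / (μ1 + μ2) ≤ max (g1 (k + 1)) (g2 (k + 1)) := by
        have hh1 : F k - Δ k + 1 / (μ1 + μ2) ≤ max (g1 (k + 1)) (g2 (k + 1)) := by
          rcases le_total (f1 k) (f2 k) with h | h
          · rw [max_eq_right h] at hCmax
            exact le_trans (by linarith) (le_trans hgf2 (le_max_right _ _))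
          · rw [max_eq_left h] at hCmax
            exact le_trans (by linarith) (le_trans hgf1 (le_max_left _ _))
        have hh2 : 1 / (μ1 + μ2) + 1 / (μ1 + μ2) ≤ max (g1 (k + 1)) (g2 (k + 1)) :=
          htwo.trans (max_le_max hgb1 hgb2)
        rw [hG]
        rcases le_total (F k - Δ k) (1 / (μ1 + μ2)) with h | h
        · rw [max_eq_right h]; exact hh2
        · rw [max_eq_left h]; exact hh1
      have hDG : (μ1 + μ2) * G (k + 1) + 1 ≤ μ1 * g1 (k + 1) + μ2 * g2 (k + 1) := by
        have m1 : μ1 * (1 / μ1) ≤ μ1 * g1 (k + 1) :=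
          mul_le_mul_of_nonneg_left hgb1 hμ1.le
        have m2 : μ2 * (1 / μ2) ≤ μ2 * g2 (k + 1) :=
          mul_le_mul_of_nonneg_left hgb2 hμ2.le
        have m1' : μ1 * (f1 k - Δ k) ≤ μ1 * g1 (k + 1) :=
          mul_le_mul_of_nonneg_left hgf1 hμ1.le
        have m2' : μ2 * (f2 k - Δ k) ≤ μ2 * g2 (k + 1) :=
          mul_le_mul_of_nonneg_left hgf2 hμ2.le
        rw [hG]
        rcases le_total (F k - Δ k) (1 / (μ1 + μ2)) with h | h
        · rw [max_eq_right h, hsδ]; rw [h1a] at m1; rw [h2a] at m2; linarith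
        · rw [max_eq_left h]; nlinarith
      have hexp : (μ1 + μ2) * (G (k + 1) + 1 / (μ1 + μ2)) + 1
          = (μ1 + μ2) * G (k + 1) + 2 := by rw [mul_add, hsδ]; ring
      by_cases hle : g1 (k + 1) ≤ g2 (k + 1)
      · rw [hf1 k, hf2 k, if_pos hle, if_pos hle, hF k]
        have e1 : μ1 * (g1 (k + 1) + 1 / μ1) = μ1 * g1 (k + 1) + 1 := by
          rw [mul_add, h1a]
        refine ⟨by linarith, ?_, by rw [hexp, e1]; linarith⟩
        rw [max_eq_right hle] at hGmax; linarith
      · rw [hf1 k, hf2 k, if_neg hle, if_neg hle, hF k]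
        push_neg at hle
        have e2 : μ2 * (g2 (k + 1) + 1 / μ2) = μ2 * g2 (k + 1) + 1 := by
          rw [mul_add, h2a]
        refine ⟨?_, by linarith, by rw [hexp, e2]; linarith⟩
        rw [max_eq_left hle.le] at hGmax; linarith
  -- G dominates min g
  have hGmin : ∀ k, G (k + 1) ≤ min (g1 (k + 1)) (g2 (k + 1)) := by
    intro k
    obtain ⟨hA, hB, _⟩ := key k
    refine le_min ?_ ?_
    · rw [hG, hg1]; exact max_le_max (by linarith) ha1
    · rw [hG, hg2]; exact max_le_max (by linarith) ha2
  intro k hk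
  obtain ⟨j, rfl⟩ : ∃ j, k = j + 1 := ⟨k - 1, (Nat.succ_pred_eq_of_pos hk).symm⟩
  have hadm' := hadm (j + 1) hk
  have hmul : c (j + 1) * G (j + 1) ≤ c (j + 1) * min (g1 (j + 1)) (g2 (j + 1)) :=
    mul_le_mul_of_nonneg_left (hGmin j) (hc (j + 1))
  linarith
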